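/- Let A be an n×n matrix over a totally ordered commutative group such that the diagonal entries a_{i,i} form a maximal transversal sum, and let ℓ be a canon of A with min_i ℓ_i = 0. Then ℓ is the minimal canon of A if and only if from every row there is a path (in the reflexive transitive closure of the elementary path relation: there is an elementary path from row i to row i' if a_{i,i}+ℓ_i = a_{i',i}+ℓ_{i'}) to some row i with ℓ_i = 0. -/

import Mathlib

/-- The tropical determinant of an `n × n` matrix over a totally ordered
commutative group. -/
def tropDet {n : ℕ} {M : Type*} [AddCommGroup M] [LinearOrder M] [IsOrderedAddMonoid M]
    (A : Fin n → Fin n → M) : M :=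
  Finset.univ.sup' ⟨1, Finset.mem_univ 1⟩
    fun σ : Equiv.Perm (Fin n) => ∑ i, A i (σ i)

/-- `ℓ` is a canon for `A` with respect to the diagonal transversal family:
`ℓ` is nonnegative and each `a_{i,i} + ℓ_i` is maximal in column `i` of `A + ℓ`. -/
def DiagCanon {n : ℕ} {M : Type*} [AddCommGroup M] [LinearOrder M] [IsOrderedAddMonoid M]
    (A : Fin n → Fin n → M) (ℓ : Fin n → M) : Prop :=
  (∀ i, 0 ≤ ℓ i) ∧ ∀ i i', A i' i + ℓ i' ≤ A i i + ℓ i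

/-- Assume the diagonal of `A` is a maximal transversal sum and `ℓ` is a canon
with `min ℓ = 0`.  Then `ℓ` is the minimal canon iff from every row there is a
path (reflexive transitive closure of the elementary path relation
`i → i' ↔ a_{i,i} + ℓ_i = a_{i',i} + ℓ_{i'}`) to some row `i'` with `ℓ_{i'} = 0`. -/
theorem minimal_canon_iff_path_to_zero {n : ℕ} [NeZero n] {M : Type*}
    [AddCommGroup M] [LinearOrder M] [IsOrderedAddMonoid M] (A : Fin n → Fin n → M) (ℓ : Fin n → M)
    (hdiag : ∑ i, A i i = tropDet A)
    (hc : DiagCanon A ℓ) (h0 : ∃ i, ℓ i = 0) :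
    (∀ m, DiagCanon A m → ℓ ≤ m) ↔
      ∀ i, ∃ i', Relation.ReflTransGen
          (fun a b => A a a + ℓ a = A b a + ℓ b) i i' ∧ ℓ i' = 0 := by
  classical
  obtain ⟨hℓ0, hℓc⟩ := hc
  set r : Fin n → Fin n → Prop := fun a b => A a a + ℓ a = A b a + ℓ b with hrdef
  constructor
  · intro hmin i
    by_contra hno
    push_neg at hno
    set S : Finset (Fin n) := Finset.univ.filter (fun j => Relation.ReflTransGen r i j)
      with hSdef
    have hmemS : ∀ j, j ∈ S ↔ Relation.ReflTransGen r i j := by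
      intro j; simp [hSdef]
    have hiS : i ∈ S := (hmemS i).mpr Relation.ReflTransGen.refl
    have hSne : S.Nonempty := ⟨i, hiS⟩
    have hSpos : ∀ a ∈ S, 0 < ℓ a := by
      intro a ha
      rcases lt_or_eq_of_le (hℓ0 a) with h | h
      · exact h
      · exact absurd h.symm (hno a ((hmemS a).mp ha))
    have hgap : ∀ a ∈ S, ∀ b, b ∉ S → A b a + ℓ b < A a a + ℓ a := by
      intro a ha b hb
      rcases lt_or_eq_of_le (hℓc a b) with h | h
      · exact h
      · exact absurd ((hmemS b).mpr (((hmemS a).mp ha).tail h.symm)) hb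
    have hu : (Finset.univ : Finset (Fin n)).Nonempty := ⟨i, Finset.mem_univ i⟩
    set g : Fin n → M := fun a =>
      Finset.univ.inf' hu (fun b => if b ∈ S then ℓ a else (A a a + ℓ a) - (A b a + ℓ b))
      with hgdef
    set ε : M := S.inf' hSne g with hεdef
    have hεpos : 0 < ε := by
      rw [hεdef, Finset.lt_inf'_iff]
      intro a ha
      rw [hgdef, Finset.lt_inf'_iff]
      intro b _
      by_cases hb : b ∈ S
      · simp only [hb, if_true]; exact hSpos a ha
      · simp only [hb, if_false]; exact sub_pos.mpr (hgap a ha b hb)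
    have hεℓ : ∀ a ∈ S, ε ≤ ℓ a := by
      intro a ha
      refine le_trans (Finset.inf'_le _ ha) ?_
      refine le_trans (Finset.inf'_le _ (Finset.mem_univ a)) ?_
      simp [ha]
    have hεgap : ∀ a ∈ S, ∀ b, b ∉ S → ε ≤ (A a a + ℓ a) - (A b a + ℓ b) := by
      intro a ha b hb
      refine le_trans (Finset.inf'_le _ ha) ?_
      refine le_trans (Finset.inf'_le _ (Finset.mem_univ b)) ?_
      simp [hb]
    set m : Fin n → M := fun j => if j ∈ S then ℓ j - ε else ℓ j with hmdef
    have hmcanon : DiagCanon A m := by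
      constructor
      · intro j
        by_cases hj : j ∈ S
        · simp only [hmdef, hj, if_true]
          exact sub_nonneg.mpr (hεℓ j hj)
        · simp only [hmdef, hj, if_false]; exact hℓ0 j
      · intro c c'
        by_cases hc1 : c ∈ S <;> by_cases hc2 : c' ∈ S <;>
          simp only [hmdef, hc1, hc2, if_true, if_false]
        · rw [← add_sub_assoc, ← add_sub_assoc]
          exact sub_le_sub_right (hℓc c c') ε
        · have h := hεgap c hc1 c' hc2
          rw [le_sub_iff_add_le] at h
          rw [← add_sub_assoc, le_sub_iff_add_le, add_comm]
          exact h
        · exact le_trans (add_le_add_right (sub_le_self _ hεpos.le) _) (hℓc c c')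
        · exact hℓc c c'
    have := hmin m hmcanon i
    simp only [hmdef, hiS, if_true] at this
    exact absurd this (not_le.mpr (sub_lt_self _ hεpos))
  · intro h m hm c
    obtain ⟨i', hpath, hz⟩ := h c
    obtain ⟨hm0, hmc⟩ := hm
    have mono : ∀ {x y : Fin n}, Relation.ReflTransGen r x y → ℓ x - m x ≤ ℓ y - m y := by
      intro x y hp
      induction hp with
      | refl => exact le_refl _
      | @tail b c' _ hbc ih =>
        refine le_trans ih ?_
        have h1 : m c' - m b ≤ A b b - A c' b := by
          rw [sub_le_sub_iff, add_comm]
          exact hmc b c'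
        have h2 : A b b - A c' b = ℓ c' - ℓ b := by
          rw [sub_eq_sub_iff_add_eq_add, add_comm (ℓ c')]
          exact hbc
        rw [h2, sub_le_sub_iff] at h1
        rw [sub_le_sub_iff, add_comm (ℓ b)]
        exact h1
    have key : ℓ c - m c ≤ ℓ i' - m i' := mono hpath
    rw [hz, zero_sub] at key
    have : ℓ c - m c ≤ 0 := le_trans key (neg_nonpos.mpr (hm0 i'))
    exact sub_nonpos.mp this
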